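/- Let Φ ∈ ℝ^{m×n}, T ⊆ {1,…,n}, k ≥ 1, and δ ∈ (0,1). Assume Φ is a δ-stable embedding of (Σ_{2k}, Σ_T), i.e., (1−δ)‖u−v‖₂² ≤ ‖Φu − Φv‖₂² ≤ (1+δ)‖u−v‖₂² for every u ∈ ℝⁿ with at most 2k nonzero entries and every v ∈ ℝⁿ with supp v ⊆ T. Let P : ℝᵐ → ℝᵐ be the orthogonal projection onto the orthogonal complement of the linear span of the columns of Φ indexed by T, and set Φ̃ = P∘Φ. Then for every w ∈ ℝⁿ with supp w ⊆ Tᶜ and at most 2k nonzero entries, (1 − δ/(1−δ))·‖w‖₂² ≤ ‖Φ̃w‖₂² ≤ (1 + δ/(1−δ))·‖w‖₂². -/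

import Mathlib

open scoped BigOperators

/-- The Euclidean (ℓ₂) norm of a vector. -/
noncomputable def l2 {d : ℕ} (u : Fin d → ℝ) : ℝ := Real.sqrt (∑ i, (u i) ^ 2)

/-- The ℓ₁ norm of a vector. -/
noncomputable def l1 {d : ℕ} (u : Fin d → ℝ) : ℝ := ∑ i, |u i|

/-- `restr S u` equals `u` on `S` and `0` outside `S`. -/
def restr {n : ℕ} (S : Finset (Fin n)) (u : Fin n → ℝ) : Fin n → ℝ :=
  fun i => if i ∈ S then u i else 0

/-- Restricted Isometry Property of order `q` with radius `δ`. -/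
def RIP {m n : ℕ} (Φ : Matrix (Fin m) (Fin n) ℝ) (q : ℕ) (δ : ℝ) : Prop :=
  ∀ u : Fin n → ℝ, (Function.support u).ncard ≤ q →
    (1 - δ) * (l2 u) ^ 2 ≤ (l2 (Φ.mulVec u)) ^ 2 ∧
    (l2 (Φ.mulVec u)) ^ 2 ≤ (1 + δ) * (l2 u) ^ 2

/-- `xs` solves the innovative Basis Pursuit DeNoise program. -/
def solvesIBPDN {m n : ℕ} (Φ : Matrix (Fin m) (Fin n) ℝ) (y : Fin m → ℝ) (ε : ℝ)
    (T : Finset (Fin n)) (xs : Fin n → ℝ) : Prop :=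
  l2 (y - Φ.mulVec xs) ≤ ε ∧
  ∀ u : Fin n → ℝ, l2 (y - Φ.mulVec u) ≤ ε → l1 (restr Tᶜ xs) ≤ l1 (restr Tᶜ u)

/-- `S` is a set of largest-magnitude entries of `r`. -/
def isLargest {n : ℕ} (r : Fin n → ℝ) (S : Finset (Fin n)) : Prop :=
  ∀ i ∈ S, ∀ j ∉ S, |r j| ≤ |r i|

lemma l2_sq {d : ℕ} (u : Fin d → ℝ) : (l2 u) ^ 2 = ∑ i, (u i) ^ 2 := by
  rw [l2, Real.sq_sqrt]
  positivity

lemma norm_euclid_sq {d : ℕ} (u : EuclideanSpace ℝ (Fin d)) :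
    ‖u‖ ^ 2 = ∑ i, (u i) ^ 2 := by
  rw [EuclideanSpace.norm_eq, Real.sq_sqrt]
  · simp [sq_abs]
  · positivity

/-- Every element of the span of the columns indexed by `T` is `Φ.mulVec v`
for some `v` supported inside `T`. -/
lemma mem_span_cols {m n : ℕ} (Φ : Matrix (Fin m) (Fin n) ℝ) (T : Finset (Fin n))
    (y : EuclideanSpace ℝ (Fin m))
    (hy : y ∈ Submodule.span ℝ
      {c : EuclideanSpace ℝ (Fin m) | ∃ j ∈ T, c = fun i => Φ i j}) :
    ∃ v : Fin n → ℝ, Function.support v ⊆ (T : Set (Fin n)) ∧ y = Φ.mulVec v := by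
  induction hy using Submodule.span_induction with
  | mem c hc =>
      obtain ⟨j, hj, hc⟩ := hc
      refine ⟨Pi.single j 1, ?_, ?_⟩
      · intro i hi
        by_contra hiT
        have : i ≠ j := by rintro rfl; exact hiT hj
        exact hi (Pi.single_eq_of_ne this 1)
      · rw [hc]; funext i
        simp [Matrix.mulVec_single]
  | zero => exact ⟨0, by simp, by simp [Matrix.mulVec_zero]⟩
  | add x y hx hy ihx ihy =>
      obtain ⟨v1, hv1, h1⟩ := ihx
      obtain ⟨v2, hv2, h2⟩ := ihy
      exact ⟨v1 + v2, (Function.support_add _ _).trans (Set.union_subset hv1 hv2),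
        by rw [WithLp.ofLp_add, h1, h2, Matrix.mulVec_add]⟩
  | smul a x hx ih =>
      obtain ⟨v, hv, h⟩ := ih
      exact ⟨a • v, (Function.support_smul_subset_right _ _).trans hv,
        by rw [WithLp.ofLp_smul, h, Matrix.mulVec_smul]⟩

set_option maxHeartbeats 1000000

/-- **Lemma (Corollary 4 of Davenport et al.):** if `Φ` is a `δ`-stable
embedding of `(Σ_{2k}, Σ_T)`, then `Φ̃ = P ∘ Φ` satisfies the RIP of order `2k`
with radius `δ/(1−δ)` on the vectors supported in `Tᶜ`. -/
theorem projected_matrix_stable_embedding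
    {m n : ℕ} (Φ : Matrix (Fin m) (Fin n) ℝ) (T : Finset (Fin n))
    (k : ℕ) (hk : 1 ≤ k) (δ : ℝ) (hδ : δ ∈ Set.Ioo (0 : ℝ) 1)
    (hemb : ∀ u v : Fin n → ℝ, (Function.support u).ncard ≤ 2 * k →
      Function.support v ⊆ (T : Set (Fin n)) →
      (1 - δ) * (l2 (u - v)) ^ 2 ≤ (l2 (Φ.mulVec u - Φ.mulVec v)) ^ 2 ∧
      (l2 (Φ.mulVec u - Φ.mulVec v)) ^ 2 ≤ (1 + δ) * (l2 (u - v)) ^ 2)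
    (V : Submodule ℝ (EuclideanSpace ℝ (Fin m)))
    (hV : V = Submodule.span ℝ
      {c : EuclideanSpace ℝ (Fin m) | ∃ j ∈ T, c = fun i => Φ i j}) :
    ∀ w : Fin n → ℝ, Function.support w ⊆ (Tᶜ : Finset (Fin n)) →
      (Function.support w).ncard ≤ 2 * k →
      (1 - δ / (1 - δ)) * (l2 w) ^ 2 ≤
          ‖Vᗮ.orthogonalProjectionOnto (WithLp.toLp 2 (Φ.mulVec w))‖ ^ 2 ∧
      ‖Vᗮ.orthogonalProjectionOnto (WithLp.toLp 2 (Φ.mulVec w))‖ ^ 2 ≤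
          (1 + δ / (1 - δ)) * (l2 w) ^ 2 := by
  obtain ⟨hδ0, hδ1⟩ := hδ
  have h1δ : (0:ℝ) < 1 - δ := by linarith
  intro w hwT hwk
  -- x is Φw viewed in Euclidean space
  set x : EuclideanSpace ℝ (Fin m) := WithLp.toLp 2 (Φ.mulVec w) with hx
  -- the projection onto V is a combination of columns of T
  obtain ⟨v, hvT, hpv⟩ := mem_span_cols Φ T (V.orthogonalProjectionOnto x)
    (hV ▸ (V.orthogonalProjectionOnto x).2)
  -- disjointness of supports : w i * v i = 0 pointwise
  have hdisj : ∀ i, w i * v i = 0 := by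
    intro i
    by_cases hwi : w i = 0
    · simp [hwi]
    · have : i ∈ (Tᶜ : Finset (Fin n)) := hwT hwi
      have hiT : i ∉ (T : Set (Fin n)) := by simpa using this
      have : v i = 0 := by
        by_contra hvi
        exact hiT (hvT hvi)
      simp [this]
  -- scalars
  set W : ℝ := ∑ i, (w i) ^ 2 with hW
  set N : ℝ := ∑ i, (v i) ^ 2 with hN
  set A : ℝ := ∑ i, (Φ.mulVec w i) ^ 2 with hA
  set B : ℝ := ∑ i, (Φ.mulVec v i) ^ 2 with hB
  have hWnn : 0 ≤ W := Finset.sum_nonneg fun i _ => sq_nonneg _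
  have hNnn : 0 ≤ N := Finset.sum_nonneg fun i _ => sq_nonneg _
  have hBnn : 0 ≤ B := Finset.sum_nonneg fun i _ => sq_nonneg _
  -- cross term : ⟪x, Φv⟫ = B, from orthogonality of x - proj to V
  have hcross : ∑ i, Φ.mulVec w i * Φ.mulVec v i = B := by
    have horth := Submodule.sub_starProjection_mem_orthogonal (K := V) x
    have hmem : (V.orthogonalProjectionOnto x : EuclideanSpace ℝ (Fin m)) ∈ V :=
      (V.orthogonalProjectionOnto x).2
    have h0 : (inner ℝ ((V.orthogonalProjectionOnto x : EuclideanSpace ℝ (Fin m)))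
        (x - V.orthogonalProjectionOnto x) : ℝ) = 0 :=
      (Submodule.mem_orthogonal V _).1 horth _ hmem
    have h0' : (inner ℝ ((V.orthogonalProjectionOnto x : EuclideanSpace ℝ (Fin m))) x : ℝ)
        = (inner ℝ ((V.orthogonalProjectionOnto x : EuclideanSpace ℝ (Fin m)))
            ((V.orthogonalProjectionOnto x : EuclideanSpace ℝ (Fin m))) : ℝ) := by
      have := inner_sub_right (𝕜 := ℝ)
        ((V.orthogonalProjectionOnto x : EuclideanSpace ℝ (Fin m))) x
        (V.orthogonalProjectionOnto x)
      rw [h0] at this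
      linarith [this]
    have hfun : ∀ i, (V.orthogonalProjectionOnto x : EuclideanSpace ℝ (Fin m)) i
        = Φ.mulVec v i := fun i => congrFun hpv i
    simp only [PiLp.inner_apply, RCLike.inner_apply, conj_trivial] at h0'
    calc ∑ i, Φ.mulVec w i * Φ.mulVec v i
        = ∑ i, (V.orthogonalProjectionOnto x : EuclideanSpace ℝ (Fin m)) i * x i := by
          apply Finset.sum_congr rfl; intro i _
          rw [hfun i, hx]; ring
      _ = ∑ i, (V.orthogonalProjectionOnto x : EuclideanSpace ℝ (Fin m)) i
            * (V.orthogonalProjectionOnto x : EuclideanSpace ℝ (Fin m)) i := by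
            rw [← h0']; exact Finset.sum_congr rfl fun i _ => mul_comm _ _
      _ = B := by
          rw [hB]; apply Finset.sum_congr rfl; intro i _
          rw [hfun i]; ring
  -- basic RIP bounds: (1-δ) W ≤ A ≤ (1+δ) W
  have hAbnd := hemb w 0 hwk (by simp)
  rw [sub_zero, Matrix.mulVec_zero, sub_zero, l2_sq, l2_sq] at hAbnd
  have hA1 : (1 - δ) * W ≤ A := hAbnd.1
  have hA2 : A ≤ (1 + δ) * W := hAbnd.2
  -- (1-δ) N ≤ B
  have hBbnd := hemb 0 v (by simp) hvT
  rw [Matrix.mulVec_zero, zero_sub, zero_sub, l2_sq, l2_sq] at hBbnd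
  have hB1 : (1 - δ) * N ≤ B := by
    have e1 : (∑ i, ((-v) i) ^ 2) = N := by
      rw [hN]; apply Finset.sum_congr rfl; intro i _; simp [neg_sq]
    have e2 : (∑ i, ((-(Φ.mulVec v)) i) ^ 2) = B := by
      rw [hB]; apply Finset.sum_congr rfl; intro i _; simp [neg_sq]
    have := hBbnd.1
    rw [e1, e2] at this
    exact this
  -- the key inequality via the parallelogram trick with u = δ•w, v = ±(1-δ)•v
  have hsupp_smul : (Function.support (δ • w)).ncard ≤ 2 * k := by
    have : Function.support (δ • w) ⊆ Function.support w :=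
      Function.support_smul_subset_right _ _
    have hfin : (Function.support w).Finite :=
      Set.Finite.subset (Set.finite_coe_iff.1 inferInstance : (↑(Tᶜ : Finset (Fin n)) : Set (Fin n)).Finite) hwT
    exact le_trans (Set.ncard_le_ncard this hfin) hwk
  have hkey : 4 * δ * (1 - δ) * B ≤ 2 * δ * (δ ^ 2 * W + (1 - δ) ^ 2 * N) := by
    have hsub := hemb (δ • w) ((1 - δ) • v) hsupp_smul
      ((Function.support_smul_subset_right _ _).trans hvT)
    have hadd := hemb (δ • w) (-((1 - δ) • v)) hsupp_smul
      (by
        refine (Function.support_neg _).le.trans ?_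
        exact (Function.support_smul_subset_right _ _).trans hvT)
    rw [l2_sq, l2_sq] at hsub hadd
    -- compute the domain norms
    have hdom1 : (∑ i, ((δ • w - (1 - δ) • v) i) ^ 2) = δ ^ 2 * W + (1 - δ) ^ 2 * N := by
      rw [hW, hN, Finset.mul_sum, Finset.mul_sum, ← Finset.sum_add_distrib]
      apply Finset.sum_congr rfl; intro i _
      have := hdisj i
      simp only [Pi.sub_apply, Pi.smul_apply, smul_eq_mul]
      nlinarith [hdisj i]
    have hdom2 : (∑ i, ((δ • w - -((1 - δ) • v)) i) ^ 2) = δ ^ 2 * W + (1 - δ) ^ 2 * N := by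
      rw [hW, hN, Finset.mul_sum, Finset.mul_sum, ← Finset.sum_add_distrib]
      apply Finset.sum_congr rfl; intro i _
      simp only [Pi.sub_apply, Pi.neg_apply, Pi.smul_apply, smul_eq_mul]
      nlinarith [hdisj i]
    rw [hdom1] at hsub
    rw [hdom2] at hadd
    -- the image norms
    have him : (∑ i, ((Φ.mulVec (δ • w) - Φ.mulVec (-((1 - δ) • v))) i) ^ 2)
        - (∑ i, ((Φ.mulVec (δ • w) - Φ.mulVec ((1 - δ) • v)) i) ^ 2)
        = 4 * δ * (1 - δ) * B := by
      rw [← Finset.sum_sub_distrib]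
      have : ∀ i ∈ Finset.univ, ((Φ.mulVec (δ • w) - Φ.mulVec (-((1 - δ) • v))) i) ^ 2
          - ((Φ.mulVec (δ • w) - Φ.mulVec ((1 - δ) • v)) i) ^ 2
          = 4 * δ * (1 - δ) * (Φ.mulVec w i * Φ.mulVec v i) := by
        intro i _
        simp only [Pi.sub_apply, Matrix.mulVec_smul, Matrix.mulVec_neg, Pi.neg_apply,
          Pi.smul_apply, smul_eq_mul]
        ring
      rw [Finset.sum_congr rfl this, ← Finset.mul_sum, hcross]
    nlinarith [hsub.1, hadd.2, him]
  -- conclude B ≤ δ²/(1-δ) W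
  have hBW : (1 - δ) * B ≤ δ ^ 2 * W := by
    nlinarith [hkey, mul_le_mul_of_nonneg_left hB1
      (by positivity : (0:ℝ) ≤ 2 * δ * (1 - δ)), hδ0, mul_pos hδ0 h1δ]
  -- Pythagoras
  have hpyth : ‖Vᗮ.orthogonalProjectionOnto x‖ ^ 2 = A - B := by
    have := Submodule.norm_sq_eq_add_norm_sq_projection x V
    have hxA : ‖x‖ ^ 2 = A := by
      rw [norm_euclid_sq, hA, hx]
    have hpB : ‖V.orthogonalProjectionOnto x‖ ^ 2 = B := by
      have : ‖V.orthogonalProjectionOnto x‖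
          = ‖(V.orthogonalProjectionOnto x : EuclideanSpace ℝ (Fin m))‖ := rfl
      rw [this, norm_euclid_sq, hpv, hB]
    rw [hxA, hpB] at this
    linarith
  rw [l2_sq, ← hW]
  have hne : (1 - δ) ≠ 0 := ne_of_gt h1δ
  constructor
  · have key : (1 - 2 * δ) * W ≤ (1 - δ) * (A - B) := by nlinarith [hA1, hBW]
    have hdm : δ / (1 - δ) * (1 - δ) = δ := div_mul_cancel₀ δ hne
    have heq : (1 - δ / (1 - δ)) * W = ((1 - 2 * δ) * W) / (1 - δ) := by
      rw [eq_div_iff hne]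
      linear_combination (-W) * hdm
    rw [hpyth, heq, div_le_iff₀ h1δ]
    nlinarith [key]
  · rw [hpyth]
    have hδle : δ ≤ δ / (1 - δ) := by
      rw [le_div_iff₀ h1δ]; nlinarith
    have := mul_le_mul_of_nonneg_right hδle hWnn
    nlinarith [hA2, hBnn]
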